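/- arXiv:0808.0258 — 3 statements merged into one kernel-verified Lean document; each statement's English description precedes it below -/
import Mathlib

section
/- If ϱ:(0,∞)→(0,∞) is regular and submultiplicative, then α(ϱ) := sup_{x∈(0,1)} log ϱ(x)/log x and β(ϱ) := inf_{x∈(1,∞)} log ϱ(x)/log x satisfy −∞ < α(ϱ) ≤ β(ϱ) < +∞. -/
noncomputable section

/-- A function is submultiplicative if `ρ (x*y) ≤ ρ x * ρ y` for all positive `x, y`. -/
def Submult (ρ : ℝ → ℝ) : Prop :=
  ∀ x ∈ Set.Ioi (0:ℝ), ∀ y ∈ Set.Ioi (0:ℝ), ρ (x * y) ≤ ρ x * ρ y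

/-- A function is regular if it is bounded from above in some open neighborhood of `1`. -/
def Regular (ρ : ℝ → ℝ) : Prop :=
  ∃ ε > (0:ℝ), ∃ M : ℝ, ∀ x : ℝ, |x - 1| < ε → ρ x ≤ M

/-- Positivity on `(0, ∞)`. -/
def PosOn (ρ : ℝ → ℝ) : Prop := ∀ x ∈ Set.Ioi (0:ℝ), 0 < ρ x

/-- The quotient `log ρ(x) / log x`. -/
noncomputable def idxFun (ρ : ℝ → ℝ) (x : ℝ) : ℝ := Real.log (ρ x) / Real.log x

/-- Lower index `α(ρ) = sup_{x ∈ (0,1)} log ρ(x)/log x`. -/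
noncomputable def alphaIdx (ρ : ℝ → ℝ) : ℝ := sSup (idxFun ρ '' Set.Ioo 0 1)

/-- Upper index `β(ρ) = inf_{x ∈ (1,∞)} log ρ(x)/log x`. -/
noncomputable def betaIdx (ρ : ℝ → ℝ) : ℝ := sInf (idxFun ρ '' Set.Ioi 1)

lemma key_lemma (ρ : ℝ → ℝ) (hpos : PosOn ρ) (hreg : Regular ρ) (hsub : Submult ρ) :
    ∀ x ∈ Set.Ioo (0:ℝ) 1, ∀ y ∈ Set.Ioi (1:ℝ), idxFun ρ x ≤ idxFun ρ y := by
  obtain ⟨ε, hε, M, hM⟩ := hreg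
  set f : ℝ → ℝ := fun u => Real.log (ρ (Real.exp u)) with hfdef
  have hsubf : ∀ u v : ℝ, f (u + v) ≤ f u + f v := by
    intro u v
    have h1 := Real.exp_pos u
    have h2 := Real.exp_pos v
    have h3 := hsub _ h1 _ h2
    calc f (u + v) = Real.log (ρ (Real.exp u * Real.exp v)) := by
          simp [hfdef, Real.exp_add]
      _ ≤ Real.log (ρ (Real.exp u) * ρ (Real.exp v)) :=
          Real.log_le_log (hpos _ (mul_pos h1 h2)) h3
      _ = f u + f v := Real.log_mul (ne_of_gt (hpos _ h1)) (ne_of_gt (hpos _ h2))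
  have hadd : ∀ (k : ℕ) (x t : ℝ), f (x + k * t) ≤ f x + k * f t := by
    intro k
    induction k with
    | zero => intro x t; simp
    | succ k ih =>
      intro x t
      have he : x + ((k+1 : ℕ):ℝ) * t = (x + k * t) + t := by push_cast; ring
      rw [he]
      calc f ((x + k*t) + t) ≤ f (x + k*t) + f t := hsubf _ _
        _ ≤ (f x + k * f t) + f t := by linarith [ih x t]
        _ = f x + ((k+1 : ℕ):ℝ) * f t := by push_cast; ring
  have hf0 : 0 ≤ f 0 := by
    have h1 : (1:ℝ) ∈ Set.Ioi (0:ℝ) := by norm_num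
    have h2 := hsub 1 h1 1 h1
    have hρ1 := hpos 1 h1
    have h2' : ρ 1 ≤ ρ 1 * ρ 1 := by simpa using h2
    have h3 : 1 ≤ ρ 1 := by nlinarith
    simpa [hfdef] using Real.log_nonneg h3
  obtain ⟨δ, hδ, hδ'⟩ :=
    Metric.continuousAt_iff.mp (Real.continuous_exp.continuousAt (x := (0:ℝ))) ε hε
  have hMbound : ∀ s : ℝ, |s| < δ → f s ≤ Real.log M := by
    intro s hs
    have h1 : |Real.exp s - 1| < ε := by
      have := hδ' (by simpa [Real.dist_eq] using hs)
      simpa [Real.dist_eq, Real.exp_zero] using this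
    exact Real.log_le_log (hpos _ (Real.exp_pos s)) (hM _ h1)
  -- f is bounded above on compacts
  have hcompact : ∀ R : ℝ, 0 < R → ∃ C : ℝ, ∀ w : ℝ, |w| ≤ R → f w ≤ C := by
    intro R hR
    set k : ℕ := ⌈R / δ⌉₊ with hk
    refine ⟨Real.log M + ((k:ℝ)+1) * Real.log M, fun w hw => ?_⟩
    have hk1 : (0:ℝ) < (k:ℝ) + 1 := by positivity
    have hsmall : |w / ((k:ℝ)+1)| < δ := by
      rw [abs_div, abs_of_pos hk1, div_lt_iff₀ hk1]
      have h1 : R / δ ≤ (k:ℝ) := Nat.le_ceil _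
      rw [div_le_iff₀ hδ] at h1
      nlinarith [abs_nonneg w, hw]
    have hw' : w = 0 + ((k+1 : ℕ) : ℝ) * (w / ((k:ℝ)+1)) := by
      push_cast; field_simp; ring
    have h0M : f 0 ≤ Real.log M := hMbound 0 (by simpa using hδ)
    calc f w = f (0 + ((k+1:ℕ):ℝ) * (w / ((k:ℝ)+1))) := by rw [← hw']
      _ ≤ f 0 + ((k+1:ℕ):ℝ) * f (w / ((k:ℝ)+1)) := hadd (k+1) 0 _
      _ ≤ Real.log M + ((k:ℝ)+1) * Real.log M := by
          have h2 := hMbound _ hsmall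
          push_cast
          nlinarith
  -- the main slope inequality for f
  have hkey : ∀ u v : ℝ, u < 0 → 0 < v → f u / u ≤ f v / v := by
    intro u v hu hv
    obtain ⟨a, ha, rfl⟩ : ∃ a : ℝ, 0 < a ∧ u = -a := ⟨-u, by linarith, by ring⟩
    obtain ⟨C, hC⟩ := hcompact a ha
    have hClb : ∀ w : ℝ, |w| ≤ a → -C ≤ f w := by
      intro w hw
      have h1 : f 0 ≤ f w + f (-w) := by
        have := hsubf w (-w); simpa using this
      have h2 : f (-w) ≤ C := hC (-w) (by simpa using hw)
      linarith
    have hge : ∀ n : ℕ, -2*C - |f (-a)| ≤ n * (f v + (v / a) * f (-a)) := by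
      intro n
      set m : ℕ := ⌊(n * v) / a⌋₊ with hm
      have hnv : 0 ≤ (n:ℝ) * v := by positivity
      have hm1 : (m:ℝ) ≤ n * v / a := Nat.floor_le (by positivity)
      have hm2 : (n:ℝ) * v / a < m + 1 := Nat.lt_floor_add_one _
      have hw0 : 0 ≤ (n:ℝ) * v - m * a := by
        have h := (le_div_iff₀ ha).mp hm1
        linarith
      have hwa : (n:ℝ) * v - m * a ≤ a := by
        have h := (div_lt_iff₀ ha).mp hm2
        nlinarith
      have hababs : |(n:ℝ) * v - m * a| ≤ a := by
        rw [abs_of_nonneg hw0]; exact hwa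
      have hwform : (n:ℝ) * v - m * a = (0 + (n:ℝ) * v) + (m:ℝ) * (-a) := by
        ring
      have hchain : f ((n:ℝ) * v - m * a) ≤ f 0 + (n:ℝ) * f v + (m:ℝ) * f (-a) := by
        calc f ((n:ℝ) * v - m * a) = f ((0 + (n:ℝ) * v) + (m:ℝ) * (-a)) := by
              rw [hwform]
          _ ≤ f (0 + (n:ℝ) * v) + (m:ℝ) * f (-a) := hadd m _ (-a)
          _ ≤ (f 0 + (n:ℝ) * f v) + (m:ℝ) * f (-a) := by
              linarith [hadd n 0 v]
          _ = f 0 + (n:ℝ) * f v + (m:ℝ) * f (-a) := by ring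
      have hf0C : f 0 ≤ C := hC 0 (by simpa using le_of_lt ha)
      have hlb : -C ≤ f ((n:ℝ) * v - m * a) := hClb _ hababs
      have hmfu : (m:ℝ) * f (-a) ≤ (n * v / a) * f (-a) + |f (-a)| := by
        rcases le_or_gt 0 (f (-a)) with hfu | hfu
        · have := mul_le_mul_of_nonneg_right hm1 hfu
          have habs : |f (-a)| = f (-a) := abs_of_nonneg hfu
          nlinarith [abs_nonneg (f (-a))]
        · have h1 : n * v / a - 1 ≤ (m:ℝ) := by linarith
          have := mul_le_mul_of_nonpos_right h1 (le_of_lt hfu)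
          have habs : |f (-a)| = -(f (-a)) := abs_of_neg hfu
          nlinarith
      have hrw : (n:ℝ) * f v + (n:ℝ) * v / a * f (-a)
          = (n:ℝ) * (f v + (v / a) * f (-a)) := by ring
      linarith [hchain, hf0C, hlb, hmfu, hrw]
    have ht : 0 ≤ f v + (v / a) * f (-a) := by
      by_contra ht
      push_neg at ht
      obtain ⟨n, hn⟩ := exists_nat_gt ((-2*C - |f (-a)|) / (f v + (v / a) * f (-a)))
      have h1 : (n:ℝ) * (f v + (v / a) * f (-a)) < -2*C - |f (-a)| := by
        rw [div_lt_iff_of_neg ht] at hn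
        linarith
      exact absurd (hge n) (by linarith)
    have hgoal : -(f (-a)) * v ≤ f v * a := by
      have h1 : 0 ≤ a * (f v + (v / a) * f (-a)) :=
        mul_nonneg (le_of_lt ha) ht
      have h2 : a * (f v + (v / a) * f (-a)) = a * f v + v * f (-a) := by
        field_simp
      linarith
    rw [div_neg, ← neg_div, div_le_div_iff₀ ha hv]
    exact hgoal
  -- now translate to idxFun
  intro x hx y hy
  have hx0 : 0 < x := hx.1
  have hy0 : (0:ℝ) < y := lt_trans one_pos hy
  have hlx : Real.log x < 0 := Real.log_neg hx0 hx.2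
  have hly : 0 < Real.log y := Real.log_pos hy
  have h1 : idxFun ρ x = f (Real.log x) / Real.log x := by
    simp [idxFun, hfdef, Real.exp_log hx0]
  have h2 : idxFun ρ y = f (Real.log y) / Real.log y := by
    simp [idxFun, hfdef, Real.exp_log hy0]
  rw [h1, h2]
  exact hkey _ _ hlx hly

/-- If `ρ : (0,∞) → (0,∞)` is regular and submultiplicative, then
`−∞ < α(ρ) ≤ β(ρ) < +∞`, i.e. the defining sup/inf are finite and `α(ρ) ≤ β(ρ)`. -/
theorem indices_finite_and_ordered (ρ : ℝ → ℝ)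
    (hpos : PosOn ρ) (hreg : Regular ρ) (hsub : Submult ρ) :
    BddAbove (idxFun ρ '' Set.Ioo 0 1) ∧ BddBelow (idxFun ρ '' Set.Ioi 1) ∧
      alphaIdx ρ ≤ betaIdx ρ := by
  have key := key_lemma ρ hpos hreg hsub
  have hmem1 : (1/2 : ℝ) ∈ Set.Ioo (0:ℝ) 1 := by norm_num
  have hmem2 : (2:ℝ) ∈ Set.Ioi (1:ℝ) := by norm_num
  have hne1 : (idxFun ρ '' Set.Ioo 0 1).Nonempty :=
    ⟨_, Set.mem_image_of_mem _ hmem1⟩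
  have hne2 : (idxFun ρ '' Set.Ioi 1).Nonempty :=
    ⟨_, Set.mem_image_of_mem _ hmem2⟩
  have hba : BddAbove (idxFun ρ '' Set.Ioo 0 1) := by
    refine ⟨idxFun ρ 2, ?_⟩
    rintro b ⟨x, hx, rfl⟩
    exact key x hx 2 hmem2
  have hbb : BddBelow (idxFun ρ '' Set.Ioi 1) := by
    refine ⟨idxFun ρ (1/2), ?_⟩
    rintro b ⟨y, hy, rfl⟩
    exact key _ hmem1 y hy
  refine ⟨hba, hbb, ?_⟩
  apply csSup_le hne1
  rintro b ⟨x, hx, rfl⟩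
  apply le_csInf hne2
  rintro c ⟨y, hy, rfl⟩
  exact key x hx y hy
end
end

section
/- If ϱ:(0,∞)→(0,∞) is regular and submultiplicative, then for every ε>0 there exists x₀>1 such that ϱ(x) ≤ x^{α(ϱ)−ε} for all x∈(0, x₀⁻¹) and ϱ(x) ≤ x^{β(ϱ)+ε} for all x∈(x₀,∞). -/
noncomputable section

private lemma nfold_aux (f : ℝ → ℝ) (hsub : ∀ s t, f (s + t) ≤ f s + f t) :
    ∀ n : ℕ, 1 ≤ n → ∀ s : ℝ, f (n * s) ≤ n * f s := by
  intro n hn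
  induction n with
  | zero => omega
  | succ m ih =>
    intro s
    rcases Nat.eq_zero_or_pos m with hm | hm
    · subst hm; simp
    · have h1 := ih hm s
      have h2 := hsub ((m : ℝ) * s) s
      have he : ((m : ℝ) + 1) * s = (m : ℝ) * s + s := by ring
      push_cast
      rw [he]
      calc f ((m : ℝ) * s + s) ≤ f ((m : ℝ) * s) + f s := h2
        _ ≤ (m : ℝ) * f s + f s := by linarith
        _ = ((m : ℝ) + 1) * f s := by ring

private lemma bounded_on_aux (f : ℝ → ℝ) (hsub : ∀ s t, f (s + t) ≤ f s + f t)
    (δ C₀ : ℝ) (hδ : 0 < δ) (hC₀ : 0 ≤ C₀) (h0 : ∀ t, |t| ≤ δ → f t ≤ C₀)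
    (b : ℝ) (hb : 0 < b) : ∃ C, ∀ r : ℝ, |r| ≤ b → f r ≤ C := by
  set n : ℕ := ⌈b / δ⌉₊ with hn
  have hn1 : 1 ≤ n := Nat.one_le_ceil_iff.mpr (by positivity)
  have hnR : (0:ℝ) < n := by exact_mod_cast hn1
  have hble : b / δ ≤ n := Nat.le_ceil _
  refine ⟨(n : ℝ) * C₀, fun r hr => ?_⟩
  have hsmall : |r / (n:ℝ)| ≤ δ := by
    rw [abs_div, abs_of_pos hnR, div_le_iff₀ hnR]
    have : b ≤ (n:ℝ) * δ := by
      rw [div_le_iff₀ hδ] at hble; linarith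
    calc |r| ≤ b := hr
      _ ≤ (n:ℝ) * δ := this
      _ = δ * n := mul_comm _ _
  have h1 := nfold_aux f hsub n hn1 (r / (n:ℝ))
  have he : (n:ℝ) * (r / (n:ℝ)) = r := by field_simp
  rw [he] at h1
  have h2 := h0 _ hsmall
  calc f r ≤ (n:ℝ) * f (r / n) := h1
    _ ≤ (n:ℝ) * C₀ := by nlinarith

private lemma core_aux (f : ℝ → ℝ) (hsub : ∀ s t, f (s + t) ≤ f s + f t)
    (t₁ C γ ε : ℝ) (ht₁ : 0 < t₁) (hC : ∀ r : ℝ, |r| ≤ 2 * t₁ → f r ≤ C)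
    (hft : f t₁ ≤ γ * t₁) (hε : 0 < ε) :
    ∃ T ≥ 1, ∀ t ≥ T, f t ≤ (γ + ε) * t := by
  have key : ∀ n : ℕ, ∀ t : ℝ, t₁ + n * t₁ ≤ t → t ≤ t₁ + (n + 1) * t₁ →
      f t ≤ n * (γ * t₁) + C := by
    intro n
    induction n with
    | zero =>
      intro t h1 h2
      push_cast at h1 h2 ⊢
      have := hC t (by rw [abs_le]; constructor <;> linarith)
      linarith
    | succ m ih =>
      intro t h1 h2
      push_cast at h1 h2 ⊢
      have ht' : f t ≤ f t₁ + f (t - t₁) := by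
        have h := hsub t₁ (t - t₁)
        have he : t₁ + (t - t₁) = t := by ring
        rwa [he] at h
      have h3 : f (t - t₁) ≤ m * (γ * t₁) + C :=
        ih (t - t₁) (by push_cast; linarith) (by push_cast; linarith)
      nlinarith
  set K := max (2 * |γ| * t₁ + C) 0 with hK
  have hK0 : 0 ≤ K := le_max_right _ _
  refine ⟨max (2 * t₁) (max (K / ε) 1), le_max_of_le_right (le_max_right _ _), ?_⟩
  intro t ht
  have ht2 : 2 * t₁ ≤ t := le_trans (le_max_left _ _) ht
  have htK : K / ε ≤ t := le_trans (le_max_of_le_right (le_max_left _ _)) ht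
  set n : ℕ := ⌊(t - t₁) / t₁⌋₊ with hn
  have hge0 : 0 ≤ (t - t₁) / t₁ := div_nonneg (by linarith) ht₁.le
  have h1 : (n : ℝ) ≤ (t - t₁) / t₁ := Nat.floor_le hge0
  have h2 : (t - t₁) / t₁ < n + 1 := Nat.lt_floor_add_one _
  have hnt1 : (n:ℝ) * t₁ ≤ t - t₁ := (le_div_iff₀ ht₁).mp h1
  have hnt2 : t - 2 * t₁ ≤ (n:ℝ) * t₁ := by
    have := (div_lt_iff₀ ht₁).mp h2; nlinarith
  have hA : t₁ + n * t₁ ≤ t := by linarith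
  have hB : t ≤ t₁ + ((n:ℝ) + 1) * t₁ := by nlinarith
  have hmain := key n t hA hB
  have habs : γ * ((n:ℝ) * t₁) ≤ γ * t + 2 * |γ| * t₁ := by
    rcases le_or_gt 0 γ with h | h
    · rw [abs_of_nonneg h]; nlinarith
    · rw [abs_of_neg h]; nlinarith
  have hK1 : 2 * |γ| * t₁ + C ≤ K := le_max_left _ _
  have hft' : f t ≤ γ * t + K := by nlinarith
  have hKε : K ≤ ε * t := by
    rw [div_le_iff₀ hε] at htK
    linarith
  nlinarith

/-- If `ρ : (0,∞) → (0,∞)` is regular and submultiplicative, then for every `ε > 0`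
there is `x₀ > 1` with `ρ(x) ≤ x^{α(ρ)−ε}` on `(0, x₀⁻¹)` and
`ρ(x) ≤ x^{β(ρ)+ε}` on `(x₀, ∞)`. -/
theorem rho_le_rpow_indices (ρ : ℝ → ℝ)
    (hpos : PosOn ρ) (hreg : Regular ρ) (hsub : Submult ρ) :
    ∀ ε > (0:ℝ), ∃ x₀ > (1:ℝ),
      (∀ x ∈ Set.Ioo (0:ℝ) x₀⁻¹, ρ x ≤ x ^ (alphaIdx ρ - ε)) ∧
      (∀ x ∈ Set.Ioi x₀, ρ x ≤ x ^ (betaIdx ρ + ε)) := by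
  intro ε hε
  set f : ℝ → ℝ := fun t => Real.log (ρ (Real.exp t)) with hf
  have hsubf : ∀ s t, f (s + t) ≤ f s + f t := by
    intro s t
    have h1 := hsub (Real.exp s) (Set.mem_Ioi.mpr (Real.exp_pos s))
      (Real.exp t) (Set.mem_Ioi.mpr (Real.exp_pos t))
    have hps := hpos (Real.exp s) (Set.mem_Ioi.mpr (Real.exp_pos s))
    have hpt := hpos (Real.exp t) (Set.mem_Ioi.mpr (Real.exp_pos t))
    have hpst := hpos (Real.exp s * Real.exp t)
      (Set.mem_Ioi.mpr (mul_pos (Real.exp_pos s) (Real.exp_pos t)))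
    simp only [hf]
    rw [Real.exp_add]
    calc Real.log (ρ (Real.exp s * Real.exp t))
        ≤ Real.log (ρ (Real.exp s) * ρ (Real.exp t)) := Real.log_le_log hpst h1
      _ = Real.log (ρ (Real.exp s)) + Real.log (ρ (Real.exp t)) :=
          Real.log_mul (ne_of_gt hps) (ne_of_gt hpt)
  -- boundedness near 0
  obtain ⟨ε₀, hε₀, M, hM⟩ := hreg
  obtain ⟨δ, hδ, hδ'⟩ := Metric.continuousAt_iff.mp Real.continuous_exp.continuousAt ε₀ hε₀
  set C₀ := max (Real.log M) 0 with hC₀def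
  have hC₀0 : 0 ≤ C₀ := le_max_right _ _
  have h0 : ∀ t : ℝ, |t| ≤ δ / 2 → f t ≤ C₀ := by
    intro t ht
    have hdist : dist t 0 < δ := by
      rw [Real.dist_eq, sub_zero]; linarith
    have h2 := hδ' hdist
    rw [Real.dist_eq, Real.exp_zero] at h2
    have h3 := hM _ h2
    have h4 : Real.log (ρ (Real.exp t)) ≤ Real.log M :=
      Real.log_le_log (hpos _ (Set.mem_Ioi.mpr (Real.exp_pos t))) h3
    exact le_trans h4 (le_max_left _ _)
  -- extract t₁ for beta
  have hexβ : ∃ t₁ > (0:ℝ), f t₁ ≤ (betaIdx ρ + ε / 2) * t₁ := by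
    have hne : (idxFun ρ '' Set.Ioi 1).Nonempty :=
      ⟨idxFun ρ 2, ⟨2, by norm_num, rfl⟩⟩
    have hex : ∃ y ∈ idxFun ρ '' Set.Ioi 1, y < betaIdx ρ + ε / 2 := by
      by_cases hb : BddBelow (idxFun ρ '' Set.Ioi 1)
      · refine (csInf_lt_iff hb hne).mp ?_
        have : betaIdx ρ = sInf (idxFun ρ '' Set.Ioi 1) := rfl
        rw [← this]; linarith
      · obtain ⟨y, hy, hy'⟩ := not_bddBelow_iff.mp hb (betaIdx ρ + ε / 2)
        exact ⟨y, hy, hy'⟩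
    obtain ⟨y, ⟨x₁, hx₁, rfl⟩, hlt⟩ := hex
    have hx₁1 : (1:ℝ) < x₁ := hx₁
    have ht₁ : 0 < Real.log x₁ := Real.log_pos hx₁1
    refine ⟨Real.log x₁, ht₁, ?_⟩
    have hfe : f (Real.log x₁) = Real.log (ρ x₁) := by
      simp only [hf]
      rw [Real.exp_log (by linarith : (0:ℝ) < x₁)]
    rw [hfe]
    have hlt' : Real.log (ρ x₁) / Real.log x₁ < betaIdx ρ + ε / 2 := hlt
    exact le_of_lt ((div_lt_iff₀ ht₁).mp hlt')
  -- extract t₂ for alpha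
  have hexα : ∃ t₂ < (0:ℝ), f t₂ ≤ (alphaIdx ρ - ε / 2) * t₂ := by
    have hne : (idxFun ρ '' Set.Ioo 0 1).Nonempty :=
      ⟨idxFun ρ (1/2), ⟨1/2, by norm_num, rfl⟩⟩
    have hex : ∃ y ∈ idxFun ρ '' Set.Ioo 0 1, alphaIdx ρ - ε / 2 < y := by
      by_cases hb : BddAbove (idxFun ρ '' Set.Ioo 0 1)
      · refine (lt_csSup_iff hb hne).mp ?_
        have : alphaIdx ρ = sSup (idxFun ρ '' Set.Ioo 0 1) := rfl
        rw [← this]; linarith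
      · obtain ⟨y, hy, hy'⟩ := not_bddAbove_iff.mp hb (alphaIdx ρ - ε / 2)
        exact ⟨y, hy, hy'⟩
    obtain ⟨y, ⟨x₂, hx₂, rfl⟩, hlt⟩ := hex
    have ht₂ : Real.log x₂ < 0 := Real.log_neg hx₂.1 hx₂.2
    refine ⟨Real.log x₂, ht₂, ?_⟩
    have hfe : f (Real.log x₂) = Real.log (ρ x₂) := by
      simp only [hf]
      rw [Real.exp_log hx₂.1]
    rw [hfe]
    have hlt' : alphaIdx ρ - ε / 2 < Real.log (ρ x₂) / Real.log x₂ := hlt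
    exact le_of_lt ((lt_div_iff_of_neg ht₂).mp hlt')
  obtain ⟨t₁, ht₁, hft₁⟩ := hexβ
  obtain ⟨t₂, ht₂, hft₂⟩ := hexα
  obtain ⟨C₁, hC₁⟩ := bounded_on_aux f hsubf (δ / 2) C₀ (by linarith) hC₀0 h0 (2 * t₁) (by linarith)
  obtain ⟨C₂, hC₂⟩ := bounded_on_aux f hsubf (δ / 2) C₀ (by linarith) hC₀0 h0 (2 * (-t₂)) (by linarith)
  obtain ⟨T, hT1, hT⟩ := core_aux f hsubf t₁ C₁ (betaIdx ρ + ε / 2) (ε / 2) ht₁ hC₁ hft₁ (by linarith)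
  set g : ℝ → ℝ := fun s => f (-s) with hg
  have hsubg : ∀ s t, g (s + t) ≤ g s + g t := by
    intro s t
    have h := hsubf (-s) (-t)
    simp only [hg]
    rw [show -(s + t) = -s + -t from by ring]
    exact h
  have hCg : ∀ r : ℝ, |r| ≤ 2 * (-t₂) → g r ≤ C₂ := by
    intro r hr
    exact hC₂ (-r) (by rwa [abs_neg])
  have hgs : g (-t₂) ≤ (-(alphaIdx ρ - ε / 2)) * (-t₂) := by
    have he : g (-t₂) = f t₂ := by simp [hg]
    rw [he]
    nlinarith [hft₂]
  obtain ⟨T', hT'1, hT'⟩ := core_aux g hsubg (-t₂) C₂ (-(alphaIdx ρ - ε / 2)) (ε / 2)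
    (by linarith) hCg hgs (by linarith)
  refine ⟨Real.exp (max T T'), ?_, ?_, ?_⟩
  · rw [show (1:ℝ) = Real.exp 0 from Real.exp_zero.symm]
    exact Real.exp_lt_exp.mpr (by have := le_max_left T T'; linarith)
  · -- alpha side
    intro x hx
    obtain ⟨hx0, hxlt⟩ := hx
    have hlog : Real.log x < -(max T T') := by
      have h1 : Real.log x < Real.log (Real.exp (max T T'))⁻¹ := Real.log_lt_log hx0 hxlt
      rwa [Real.log_inv, Real.log_exp] at h1
    have hs : T' ≤ -Real.log x := by
      have := le_max_right T T'; linarith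
    have hmain := hT' (-Real.log x) hs
    have he : g (-Real.log x) = Real.log (ρ x) := by
      simp only [hg, hf, neg_neg]
      rw [Real.exp_log hx0]
    rw [he] at hmain
    have h2 : Real.log (ρ x) ≤ (alphaIdx ρ - ε) * Real.log x := by
      have heq : (-(alphaIdx ρ - ε / 2) + ε / 2) * (-Real.log x)
          = (alphaIdx ρ - ε) * Real.log x := by ring
      linarith [hmain, heq ▸ hmain]
    rw [Real.rpow_def_of_pos hx0]
    have hρx : 0 < ρ x := hpos x (Set.mem_Ioi.mpr hx0)
    calc ρ x = Real.exp (Real.log (ρ x)) := (Real.exp_log hρx).symm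
      _ ≤ Real.exp (Real.log x * (alphaIdx ρ - ε)) := by
          apply Real.exp_le_exp.mpr; rw [mul_comm]; exact h2
  · -- beta side
    intro x hx
    have hx' : Real.exp (max T T') < x := hx
    have hx0 : 0 < x := lt_trans (Real.exp_pos _) hx'
    have hlog : max T T' < Real.log x := by
      rw [← Real.log_exp (max T T')]
      exact Real.log_lt_log (Real.exp_pos _) hx'
    have hs : T ≤ Real.log x := by
      have := le_max_left T T'; linarith
    have hmain := hT (Real.log x) hs
    have he : f (Real.log x) = Real.log (ρ x) := by
      simp only [hf]
      rw [Real.exp_log hx0]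
    rw [he] at hmain
    have h2 : Real.log (ρ x) ≤ (betaIdx ρ + ε) * Real.log x := by
      have heq : (betaIdx ρ + ε / 2 + ε / 2) * Real.log x
          = (betaIdx ρ + ε) * Real.log x := by ring
      linarith [heq ▸ hmain]
    rw [Real.rpow_def_of_pos hx0]
    have hρx : 0 < ρ x := hpos x (Set.mem_Ioi.mpr hx0)
    calc ρ x = Real.exp (Real.log (ρ x)) := (Real.exp_log hρx).symm
      _ ≤ Real.exp (Real.log x * (betaIdx ρ + ε)) := by
          apply Real.exp_le_exp.mpr; rw [mul_comm]; exact h2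
end
end

section
/- Let Γ be a Carleson curve and t ∈ Γ such that arg(τ−t) = −δ log|τ−t| + O(1) as τ→t for some δ∈ℝ. Then the spirality indices satisfy δ_t⁻ = δ_t⁺ = δ. -/
open MeasureTheory

noncomputable section

open MeasureTheory in
/-- A simple curve in `ℂ`: homeomorphic image of a segment or of a circle. -/
def IsSimpleCurve (Γ : Set ℂ) : Prop :=
  ∃ f : ℝ → ℂ, ContinuousOn f (Set.Icc 0 1) ∧ f '' Set.Icc 0 1 = Γ ∧
    (Set.InjOn f (Set.Icc 0 1) ∨ (Set.InjOn f (Set.Ico 0 1) ∧ f 0 = f 1))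

open MeasureTheory in
/-- Arc-length measure on a rectifiable curve: 1-dimensional Hausdorff measure restricted. -/
noncomputable def arcMeasure (Γ : Set ℂ) : Measure ℂ :=
  (Measure.hausdorffMeasure 1 : Measure ℂ).restrict Γ

open MeasureTheory in
/-- Rectifiability: finite one-dimensional Hausdorff measure. -/
def IsRectifiable (Γ : Set ℂ) : Prop := (Measure.hausdorffMeasure 1 : Measure ℂ) Γ < ⊤

/-- A Carleson (Ahlfors–David regular) curve:
`sup_{t ∈ Γ} sup_{ε>0} |Γ(t,ε)|/ε < ∞` where `Γ(t,ε) = {τ ∈ Γ : |τ - t| < ε}`. -/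
def IsCarleson (Γ : Set ℂ) : Prop :=
  IsSimpleCurve Γ ∧ IsRectifiable Γ ∧
    ∃ C : ℝ, ∀ t ∈ Γ, ∀ ε > (0:ℝ), (arcMeasure Γ (Metric.ball t ε)).toReal ≤ C * ε

/-- `d_t = max_{τ ∈ Γ} |τ - t|`. -/
noncomputable def dCurve (Γ : Set ℂ) (t : ℂ) : ℝ :=
  sSup ((fun τ => ‖τ - t‖) '' Γ)

/-- Supremum of `ψ` over the part of `Γ` on the circle `{|τ - t| = R}`. -/
noncomputable def circSup (Γ : Set ℂ) (t : ℂ) (ψ : ℂ → ℝ) (R : ℝ) : ℝ :=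
  sSup (ψ '' {τ | τ ∈ Γ ∧ ‖τ - t‖ = R})

/-- Infimum of `ψ` over the part of `Γ` on the circle `{|τ - t| = R}`. -/
noncomputable def circInf (Γ : Set ℂ) (t : ℂ) (ψ : ℂ → ℝ) (R : ℝ) : ℝ :=
  sInf (ψ '' {τ | τ ∈ Γ ∧ ‖τ - t‖ = R})

/-- The oscillation function `(W_t ψ)(x)` of Böttcher–Karlovich. -/
noncomputable def Wt (Γ : Set ℂ) (t : ℂ) (ψ : ℂ → ℝ) (x : ℝ) : ℝ :=
  if x ≤ 1 then
    sSup ((fun R => circSup Γ t ψ (x * R) / circInf Γ t ψ R) '' Set.Ioc 0 (dCurve Γ t))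
  else
    sSup ((fun R => circSup Γ t ψ R / circInf Γ t ψ (x⁻¹ * R)) '' Set.Ioc 0 (dCurve Γ t))

/-- `a` is a continuous branch of `arg(· - t)` on `Γ \ {t}`. -/
def IsArgBranch (Γ : Set ℂ) (t : ℂ) (a : ℂ → ℝ) : Prop :=
  ContinuousOn a (Γ \ {t}) ∧
    ∀ τ ∈ Γ \ {t}, τ - t = (‖τ - t‖ : ℂ) * Complex.exp (a τ * Complex.I)

/-- `η_t(τ) = e^{-arg(τ - t)}` for the chosen branch `a` of the argument. -/
noncomputable def etaW (a : ℂ → ℝ) (τ : ℂ) : ℝ := Real.exp (-(a τ))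

/-- `φ_{t,γ}(τ) = |τ-t|^{Re γ} η_t(τ)^{Im γ} = exp(Re γ · log|τ-t| - Im γ · arg(τ-t))`. -/
noncomputable def phiW (t : ℂ) (a : ℂ → ℝ) (γ : ℂ) (τ : ℂ) : ℝ :=
  Real.exp (γ.re * Real.log (‖τ - t‖) - γ.im * a τ)

/-- Lower spirality index `δ_t⁻ = α(W_t η_t)`. -/
noncomputable def spirMinus (Γ : Set ℂ) (t : ℂ) (a : ℂ → ℝ) : ℝ := alphaIdx (Wt Γ t (etaW a))

/-- Upper spirality index `δ_t⁺ = β(W_t η_t)`. -/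
noncomputable def spirPlus (Γ : Set ℂ) (t : ℂ) (a : ℂ → ℝ) : ℝ := betaIdx (Wt Γ t (etaW a))

namespace SpiralityAux

open Set Real

lemma cont_abs (t : ℂ) : Continuous fun τ : ℂ => ‖τ - t‖ :=
  continuous_norm.comp (continuous_id.sub continuous_const)

lemma simple_compact {Γ : Set ℂ} (h : IsSimpleCurve Γ) : IsCompact Γ := by
  obtain ⟨f, hf, him, -⟩ := h
  rw [← him]
  exact isCompact_Icc.image_of_continuousOn hf

lemma simple_preconnected {Γ : Set ℂ} (h : IsSimpleCurve Γ) : IsPreconnected Γ := by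
  obtain ⟨f, hf, him, -⟩ := h
  rw [← him]
  exact isPreconnected_Icc.image f hf

lemma simple_nontrivial {Γ : Set ℂ} (h : IsSimpleCurve Γ) (t : ℂ) : ∃ p ∈ Γ, p ≠ t := by
  obtain ⟨f, hf, him, hinj⟩ := h
  have h0 : f 0 ∈ Γ := by rw [← him]; exact ⟨0, by norm_num, rfl⟩
  rcases hinj with hinj | ⟨hinj, -⟩
  · have h1 : f 1 ∈ Γ := by rw [← him]; exact ⟨1, by norm_num, rfl⟩
    have hne : f 0 ≠ f 1 := hinj.ne (by norm_num) (by norm_num) (by norm_num)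
    by_cases hc : f 0 = t
    · exact ⟨f 1, h1, fun h => hne (hc.trans h.symm)⟩
    · exact ⟨f 0, h0, hc⟩
  · have h1 : f (1/2) ∈ Γ := by rw [← him]; exact ⟨1/2, by norm_num, rfl⟩
    have hne : f 0 ≠ f (1/2) := hinj.ne (by norm_num) (by norm_num) (by norm_num)
    by_cases hc : f 0 = t
    · exact ⟨f (1/2), h1, fun h => hne (hc.trans h.symm)⟩
    · exact ⟨f 0, h0, hc⟩

lemma dCurve_pos {Γ : Set ℂ} (h : IsSimpleCurve Γ) {t : ℂ} (ht : t ∈ Γ) :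
    0 < dCurve Γ t := by
  obtain ⟨p, hp, hpt⟩ := simple_nontrivial h t
  have hbdd : BddAbove ((fun τ => ‖τ - t‖) '' Γ) :=
    ((simple_compact h).image (cont_abs t)).bddAbove
  have hle : ‖p - t‖ ≤ dCurve Γ t := le_csSup hbdd ⟨p, hp, rfl⟩
  have h0 : 0 < ‖p - t‖ := norm_pos_iff.mpr (sub_ne_zero.mpr hpt)
  linarith

lemma circle_nonempty {Γ : Set ℂ} (h : IsSimpleCurve Γ) {t : ℂ} (ht : t ∈ Γ) {R : ℝ}
    (hR0 : 0 ≤ R) (hRd : R ≤ dCurve Γ t) : ∃ τ ∈ Γ, ‖τ - t‖ = R := by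
  have hcomp : IsCompact ((fun τ => ‖τ - t‖) '' Γ) :=
    (simple_compact h).image (cont_abs t)
  have hne : ((fun τ => ‖τ - t‖) '' Γ).Nonempty := ⟨_, ⟨t, ht, rfl⟩⟩
  obtain ⟨τm, hτmΓ, hτmval⟩ := hcomp.sSup_mem hne
  have hmem : R ∈ Icc (‖t - t‖) (‖τm - t‖) := by
    rw [sub_self, norm_zero]
    exact ⟨hR0, by simp only at hτmval; rw [hτmval]; exact hRd⟩
  obtain ⟨τ, hτ, hv⟩ :=
    (simple_preconnected h).intermediate_value ht hτmΓ ((cont_abs t).continuousOn) hmem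
  exact ⟨τ, hτ, hv⟩

lemma global_bound {Γ : Set ℂ} {t : ℂ} {a : ℂ → ℝ} {δ : ℝ} (h : IsSimpleCurve Γ)
    (hc : ContinuousOn a (Γ \ {t}))
    (hO : ∃ C : ℝ, ∃ ε₀ > (0:ℝ), ∀ τ ∈ Γ \ {t}, ‖τ - t‖ < ε₀ →
      |a τ + δ * Real.log (‖τ - t‖)| ≤ C) :
    ∃ K : ℝ, 0 ≤ K ∧ ∀ τ ∈ Γ, τ ≠ t →
      |a τ + δ * Real.log (‖τ - t‖)| ≤ K := by
  obtain ⟨C, ε₀, hε₀, hC⟩ := hO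
  set F := Γ ∩ {τ : ℂ | ε₀ ≤ ‖τ - t‖} with hF
  have hFc : IsCompact F :=
    (simple_compact h).inter_right (isClosed_le continuous_const (cont_abs t))
  have hFsub : F ⊆ Γ \ {t} := by
    rintro τ ⟨hτΓ, hτb⟩
    refine ⟨hτΓ, fun h' => ?_⟩
    rw [Set.mem_singleton_iff] at h'
    rw [Set.mem_setOf_eq, h', sub_self, norm_zero] at hτb
    exact absurd hτb (not_le.mpr hε₀)
  have hcont : ContinuousOn (fun τ => a τ + δ * Real.log (‖τ - t‖)) F := by
    apply ContinuousOn.add (hc.mono hFsub)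
    apply ContinuousOn.mul continuousOn_const
    apply ContinuousOn.log ((cont_abs t).continuousOn)
    intro τ hτ
    exact ne_of_gt (lt_of_lt_of_le hε₀ hτ.2)
  obtain ⟨C₂, hC₂⟩ := hFc.exists_bound_of_continuousOn hcont
  refine ⟨max (max C C₂) 0, le_max_right _ _, fun τ hτΓ hτt => ?_⟩
  by_cases hcase : ‖τ - t‖ < ε₀
  · exact le_trans (hC τ ⟨hτΓ, by simp [hτt]⟩ hcase)
      (le_trans (le_max_left _ _) (le_max_left _ _))
  · have hb := hC₂ τ ⟨hτΓ, not_lt.mp hcase⟩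
    rw [Real.norm_eq_abs] at hb
    exact le_trans hb (le_trans (le_max_right C C₂) (le_max_left _ _))

end SpiralityAux
namespace SpiralityAux

open Set Real

lemma key_log_bound (ρ : ℝ → ℝ) (δ K : ℝ) (hK : 0 ≤ K) {x : ℝ} (hx0 : 0 < x)
    (hρpos : ∀ y : ℝ, 0 < y → 0 < ρ y)
    (hlog_low : ∀ y : ℝ, 0 < y → δ * Real.log y - K ≤ Real.log (ρ y))
    (hpow : ∀ n : ℕ, 1 ≤ n → ρ (x ^ n) ≤ (ρ x) ^ n) :
    δ * Real.log x ≤ Real.log (ρ x) := by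
  refine le_of_forall_pos_le_add ?_
  intro ε hε
  obtain ⟨m, hm⟩ := exists_nat_gt (K / ε)
  set n : ℕ := m + 1 with hn
  have hmn : K / ε < (n : ℝ) := lt_of_lt_of_le hm (by exact_mod_cast Nat.le_succ m)
  have hn1 : 1 ≤ n := Nat.le_add_left 1 m
  have hnpos : (0 : ℝ) < (n : ℝ) := by positivity
  have hxn : (0 : ℝ) < x ^ n := pow_pos hx0 n
  have h1 : δ * Real.log (x ^ n) - K ≤ Real.log (ρ (x ^ n)) := hlog_low _ hxn
  have h2 : Real.log (ρ (x ^ n)) ≤ Real.log ((ρ x) ^ n) :=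
    Real.log_le_log (hρpos _ hxn) (hpow n hn1)
  rw [Real.log_pow] at h1 h2
  have h3 : δ * ((n : ℝ) * Real.log x) - K ≤ (n : ℝ) * Real.log (ρ x) := le_trans h1 h2
  have h4 : (δ * Real.log x - K / (n : ℝ)) * (n : ℝ) ≤ Real.log (ρ x) * (n : ℝ) := by
    have heq : (δ * Real.log x - K / (n : ℝ)) * (n : ℝ)
        = δ * ((n : ℝ) * Real.log x) - K := by
      field_simp
    rw [heq]
    linarith
  have h5 : δ * Real.log x - K / (n : ℝ) ≤ Real.log (ρ x) := le_of_mul_le_mul_right h4 hnpos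
  have h6 : K / (n : ℝ) < ε := by
    rw [div_lt_iff₀ hnpos]
    rw [div_lt_iff₀ hε] at hmn
    linarith
  linarith

lemma alpha_eq_of (ρ : ℝ → ℝ) (δ K : ℝ) (hK : 0 ≤ K)
    (hlow : ∀ x : ℝ, 0 < x → Real.exp (δ * Real.log x - K) ≤ ρ x)
    (hup : ∀ x : ℝ, 0 < x → ρ x ≤ Real.exp (δ * Real.log x + K))
    (hpow : ∀ x : ℝ, 0 < x → x < 1 → ∀ n : ℕ, 1 ≤ n → ρ (x ^ n) ≤ (ρ x) ^ n) :
    alphaIdx ρ = δ := by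
  have hρpos : ∀ x : ℝ, 0 < x → 0 < ρ x :=
    fun x hx => lt_of_lt_of_le (Real.exp_pos _) (hlow x hx)
  have hlog_up : ∀ x : ℝ, 0 < x → Real.log (ρ x) ≤ δ * Real.log x + K := by
    intro x hx
    have h := Real.log_le_log (hρpos x hx) (hup x hx)
    rwa [Real.log_exp] at h
  have hlog_low : ∀ x : ℝ, 0 < x → δ * Real.log x - K ≤ Real.log (ρ x) := by
    intro x hx
    have h := Real.log_le_log (Real.exp_pos _) (hlow x hx)
    rwa [Real.log_exp] at h
  have hub : ∀ x ∈ Ioo (0:ℝ) 1, idxFun ρ x ≤ δ := by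
    rintro x ⟨hx0, hx1⟩
    have hlx : Real.log x < 0 := Real.log_neg hx0 hx1
    rw [idxFun, div_le_iff_of_neg hlx]
    exact key_log_bound ρ δ K hK hx0 hρpos hlog_low (hpow x hx0 hx1)
  have hne : (idxFun ρ '' Ioo 0 1).Nonempty :=
    ⟨idxFun ρ (1/2), ⟨1/2, by norm_num, rfl⟩⟩
  have hbdd : BddAbove (idxFun ρ '' Ioo 0 1) :=
    ⟨δ, by rintro _ ⟨x, hx, rfl⟩; exact hub x hx⟩
  unfold alphaIdx
  apply le_antisymm
  · exact csSup_le hne (by rintro _ ⟨x, hx, rfl⟩; exact hub x hx)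
  · refine le_of_forall_pos_le_add ?_
    intro ε hε
    have hKε : 0 ≤ K / ε := div_nonneg hK hε.le
    set x := Real.exp (-(K / ε + 1)) with hxdef
    have hx0 : 0 < x := Real.exp_pos _
    have hlx : Real.log x = -(K / ε + 1) := Real.log_exp _
    have hlxneg : Real.log x < 0 := by rw [hlx]; linarith
    have hx1 : x < 1 := by
      rw [hxdef, Real.exp_lt_one_iff]
      linarith
    have hidx : δ - ε ≤ idxFun ρ x := by
      rw [idxFun, le_div_iff_of_neg hlxneg]
      have h1 := hlog_up x hx0
      have h2 : δ * Real.log x + K ≤ (δ - ε) * Real.log x := by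
        rw [hlx]
        have hKe : ε * (K / ε) = K := by field_simp
        nlinarith [hε.le]
      linarith
    have hle : idxFun ρ x ≤ sSup (idxFun ρ '' Ioo 0 1) :=
      le_csSup hbdd ⟨x, ⟨hx0, hx1⟩, rfl⟩
    linarith

lemma beta_eq_of (ρ : ℝ → ℝ) (δ K : ℝ) (hK : 0 ≤ K)
    (hlow : ∀ x : ℝ, 0 < x → Real.exp (δ * Real.log x - K) ≤ ρ x)
    (hup : ∀ x : ℝ, 0 < x → ρ x ≤ Real.exp (δ * Real.log x + K))
    (hpow : ∀ x : ℝ, 1 < x → ∀ n : ℕ, 1 ≤ n → ρ (x ^ n) ≤ (ρ x) ^ n) :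
    betaIdx ρ = δ := by
  have hρpos : ∀ x : ℝ, 0 < x → 0 < ρ x :=
    fun x hx => lt_of_lt_of_le (Real.exp_pos _) (hlow x hx)
  have hlog_up : ∀ x : ℝ, 0 < x → Real.log (ρ x) ≤ δ * Real.log x + K := by
    intro x hx
    have h := Real.log_le_log (hρpos x hx) (hup x hx)
    rwa [Real.log_exp] at h
  have hlog_low : ∀ x : ℝ, 0 < x → δ * Real.log x - K ≤ Real.log (ρ x) := by
    intro x hx
    have h := Real.log_le_log (Real.exp_pos _) (hlow x hx)
    rwa [Real.log_exp] at h
  have hlb : ∀ x ∈ Ioi (1:ℝ), δ ≤ idxFun ρ x := by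
    intro x hx
    rw [Set.mem_Ioi] at hx
    have hx0 : 0 < x := lt_trans one_pos hx
    have hlx : 0 < Real.log x := Real.log_pos hx
    rw [idxFun, le_div_iff₀ hlx]
    exact key_log_bound ρ δ K hK hx0 hρpos hlog_low (hpow x hx)
  have hne : (idxFun ρ '' Ioi 1).Nonempty := ⟨idxFun ρ 2, ⟨2, by norm_num, rfl⟩⟩
  have hbdd : BddBelow (idxFun ρ '' Ioi 1) :=
    ⟨δ, by rintro _ ⟨x, hx, rfl⟩; exact hlb x hx⟩
  unfold betaIdx
  apply le_antisymm
  · refine le_of_forall_pos_le_add ?_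
    intro ε hε
    have hKε : 0 ≤ K / ε := div_nonneg hK hε.le
    set x := Real.exp (K / ε + 1) with hxdef
    have hx0 : 0 < x := Real.exp_pos _
    have hlx : Real.log x = K / ε + 1 := Real.log_exp _
    have hlxpos : 0 < Real.log x := by rw [hlx]; linarith
    have hx1 : 1 < x := by
      rw [hxdef, Real.one_lt_exp_iff]
      linarith
    have hidx : idxFun ρ x ≤ δ + ε := by
      rw [idxFun, div_le_iff₀ hlxpos]
      have h1 := hlog_up x hx0
      have h2 : δ * Real.log x + K ≤ (δ + ε) * Real.log x := by
        rw [hlx]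
        have hKe : ε * (K / ε) = K := by field_simp
        nlinarith [hε.le]
      linarith
    have hle : sInf (idxFun ρ '' Ioi 1) ≤ idxFun ρ x :=
      csInf_le hbdd ⟨x, hx1, rfl⟩
    linarith
  · exact le_csInf hne (by rintro _ ⟨x, hx, rfl⟩; exact hlb x hx)

end SpiralityAux
namespace SpiralityAux

open Set Real

lemma W_bounds {Γ : Set ℂ} {t : ℂ} {a : ℂ → ℝ} {δ : ℝ}
    (hΓ : IsCarleson Γ) (ht : t ∈ Γ) (ha : IsArgBranch Γ t a)
    (hO : ∃ C : ℝ, ∃ ε₀ > (0:ℝ), ∀ τ ∈ Γ \ {t}, ‖τ - t‖ < ε₀ →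
      |a τ + δ * Real.log (‖τ - t‖)| ≤ C) :
    ∃ K : ℝ, 0 ≤ K ∧
      (∀ x : ℝ, 0 < x → Real.exp (δ * Real.log x - K) ≤ Wt Γ t (etaW a) x ∧
        Wt Γ t (etaW a) x ≤ Real.exp (δ * Real.log x + K)) ∧
      (∀ x y : ℝ, 0 < x → x ≤ 1 → 0 < y → y ≤ 1 →
        Wt Γ t (etaW a) (x * y) ≤ Wt Γ t (etaW a) x * Wt Γ t (etaW a) y) ∧
      (∀ x y : ℝ, 1 < x → 1 < y →
        Wt Γ t (etaW a) (x * y) ≤ Wt Γ t (etaW a) x * Wt Γ t (etaW a) y) := by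
  obtain ⟨hs, -, -⟩ := hΓ
  obtain ⟨K₀, hK₀, hKb⟩ := global_bound hs ha.1 hO
  have hdpos : 0 < dCurve Γ t := dCurve_pos hs ht
  have hcirc : ∀ R : ℝ, 0 < R → R ≤ dCurve Γ t → ∃ τ ∈ Γ, ‖τ - t‖ = R :=
    fun R h1 h2 => circle_nonempty hs ht h1.le h2
  -- pointwise bounds for η on circles
  have hpt : ∀ R : ℝ, 0 < R → ∀ τ ∈ Γ, ‖τ - t‖ = R →
      Real.exp (δ * Real.log R - K₀) ≤ etaW a τ ∧
        etaW a τ ≤ Real.exp (δ * Real.log R + K₀) := by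
    intro R hR τ hτ hval
    have hτt : τ ≠ t := by
      intro h
      rw [h, sub_self, norm_zero] at hval
      exact (ne_of_gt hR) hval.symm
    have hb := hKb τ hτ hτt
    rw [hval] at hb
    obtain ⟨hb1, hb2⟩ := abs_le.mp hb
    constructor
    · show Real.exp _ ≤ Real.exp (-(a τ))
      exact Real.exp_le_exp.mpr (by linarith)
    · show Real.exp (-(a τ)) ≤ Real.exp _
      exact Real.exp_le_exp.mpr (by linarith)
  have hSne : ∀ R : ℝ, 0 < R → R ≤ dCurve Γ t →
      (etaW a '' {τ | τ ∈ Γ ∧ ‖τ - t‖ = R}).Nonempty := by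
    intro R h1 h2
    obtain ⟨τ, hτ, hv⟩ := hcirc R h1 h2
    exact ⟨_, ⟨τ, ⟨hτ, hv⟩, rfl⟩⟩
  have hSub : ∀ R : ℝ, 0 < R →
      ∀ y ∈ etaW a '' {τ | τ ∈ Γ ∧ ‖τ - t‖ = R},
        Real.exp (δ * Real.log R - K₀) ≤ y ∧ y ≤ Real.exp (δ * Real.log R + K₀) := by
    rintro R hR y ⟨τ, ⟨hτ, hv⟩, rfl⟩
    exact hpt R hR τ hτ hv
  have hbddS : ∀ R : ℝ, 0 < R →
      BddAbove (etaW a '' {τ | τ ∈ Γ ∧ ‖τ - t‖ = R}) :=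
    fun R hR => ⟨Real.exp (δ * Real.log R + K₀), fun y hy => (hSub R hR y hy).2⟩
  have hbddI : ∀ R : ℝ, 0 < R →
      BddBelow (etaW a '' {τ | τ ∈ Γ ∧ ‖τ - t‖ = R}) :=
    fun R hR => ⟨Real.exp (δ * Real.log R - K₀), fun y hy => (hSub R hR y hy).1⟩
  -- circle sup/inf bounds
  have hcs_ub : ∀ R : ℝ, 0 < R → R ≤ dCurve Γ t →
      circSup Γ t (etaW a) R ≤ Real.exp (δ * Real.log R + K₀) :=
    fun R h1 h2 => csSup_le (hSne R h1 h2) (fun y hy => (hSub R h1 y hy).2)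
  have hcs_lb : ∀ R : ℝ, 0 < R → R ≤ dCurve Γ t →
      Real.exp (δ * Real.log R - K₀) ≤ circSup Γ t (etaW a) R := by
    intro R h1 h2
    obtain ⟨τ, hτ, hv⟩ := hcirc R h1 h2
    exact le_trans (hpt R h1 τ hτ hv).1 (le_csSup (hbddS R h1) ⟨τ, ⟨hτ, hv⟩, rfl⟩)
  have hci_lb : ∀ R : ℝ, 0 < R → R ≤ dCurve Γ t →
      Real.exp (δ * Real.log R - K₀) ≤ circInf Γ t (etaW a) R :=
    fun R h1 h2 => le_csInf (hSne R h1 h2) (fun y hy => (hSub R h1 y hy).1)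
  have hci_ub : ∀ R : ℝ, 0 < R → R ≤ dCurve Γ t →
      circInf Γ t (etaW a) R ≤ Real.exp (δ * Real.log R + K₀) := by
    intro R h1 h2
    obtain ⟨τ, hτ, hv⟩ := hcirc R h1 h2
    exact le_trans (csInf_le (hbddI R h1) ⟨τ, ⟨hτ, hv⟩, rfl⟩) (hpt R h1 τ hτ hv).2
  have hci_pos : ∀ R : ℝ, 0 < R → R ≤ dCurve Γ t → 0 < circInf Γ t (etaW a) R :=
    fun R h1 h2 => lt_of_lt_of_le (Real.exp_pos _) (hci_lb R h1 h2)
  have hcs_pos : ∀ R : ℝ, 0 < R → R ≤ dCurve Γ t → 0 < circSup Γ t (etaW a) R :=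
    fun R h1 h2 => lt_of_lt_of_le (Real.exp_pos _) (hcs_lb R h1 h2)
  have hcic : ∀ R : ℝ, 0 < R → R ≤ dCurve Γ t →
      circInf Γ t (etaW a) R ≤ circSup Γ t (etaW a) R := by
    intro R h1 h2
    obtain ⟨τ, hτ, hv⟩ := hcirc R h1 h2
    exact le_trans (csInf_le (hbddI R h1) ⟨τ, ⟨hτ, hv⟩, rfl⟩)
      (le_csSup (hbddS R h1) ⟨τ, ⟨hτ, hv⟩, rfl⟩)
  -- generic ratio bounds
  have hratio_ub : ∀ r s : ℝ, 0 < r → r ≤ dCurve Γ t → 0 < s → s ≤ dCurve Γ t →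
      circSup Γ t (etaW a) r / circInf Γ t (etaW a) s ≤
        Real.exp (δ * (Real.log r - Real.log s) + 2 * K₀) := by
    intro r s hr hrd hsp hsd
    have h1 : circSup Γ t (etaW a) r / circInf Γ t (etaW a) s ≤
        Real.exp (δ * Real.log r + K₀) / Real.exp (δ * Real.log s - K₀) :=
      div_le_div₀ (Real.exp_pos _).le (hcs_ub r hr hrd) (Real.exp_pos _) (hci_lb s hsp hsd)
    have h2 : Real.exp (δ * Real.log r + K₀) / Real.exp (δ * Real.log s - K₀)
        = Real.exp (δ * (Real.log r - Real.log s) + 2 * K₀) := by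
      rw [← Real.exp_sub]
      congr 1
      ring
    rwa [h2] at h1
  have hratio_lb : ∀ r s : ℝ, 0 < r → r ≤ dCurve Γ t → 0 < s → s ≤ dCurve Γ t →
      Real.exp (δ * (Real.log r - Real.log s) - 2 * K₀) ≤
        circSup Γ t (etaW a) r / circInf Γ t (etaW a) s := by
    intro r s hr hrd hsp hsd
    have h1 : Real.exp (δ * Real.log r - K₀) / Real.exp (δ * Real.log s + K₀) ≤
        circSup Γ t (etaW a) r / circInf Γ t (etaW a) s :=
      div_le_div₀ (lt_of_lt_of_le (Real.exp_pos _) (hcs_lb r hr hrd)).le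
        (hcs_lb r hr hrd) (hci_pos s hsp hsd) (hci_ub s hsp hsd)
    have h2 : Real.exp (δ * Real.log r - K₀) / Real.exp (δ * Real.log s + K₀)
        = Real.exp (δ * (Real.log r - Real.log s) - 2 * K₀) := by
      rw [← Real.exp_sub]
      congr 1
      ring
    rwa [h2] at h1
  -- specialized per-radius ratio bounds
  have hub_low : ∀ x : ℝ, 0 < x → x ≤ 1 → ∀ R ∈ Ioc (0:ℝ) (dCurve Γ t),
      circSup Γ t (etaW a) (x * R) / circInf Γ t (etaW a) R ≤
        Real.exp (δ * Real.log x + 2 * K₀) := by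
    intro x hx0 hx1 R hR
    have hxR : 0 < x * R := mul_pos hx0 hR.1
    have hxRd : x * R ≤ dCurve Γ t :=
      le_trans (mul_le_of_le_one_left hR.1.le hx1) hR.2
    have h := hratio_ub (x * R) R hxR hxRd hR.1 hR.2
    rw [Real.log_mul (ne_of_gt hx0) (ne_of_gt hR.1)] at h
    have heq : δ * (Real.log x + Real.log R - Real.log R) + 2 * K₀
        = δ * Real.log x + 2 * K₀ := by ring
    rwa [heq] at h
  have hlb_low : ∀ x : ℝ, 0 < x → x ≤ 1 → ∀ R ∈ Ioc (0:ℝ) (dCurve Γ t),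
      Real.exp (δ * Real.log x - 2 * K₀) ≤
        circSup Γ t (etaW a) (x * R) / circInf Γ t (etaW a) R := by
    intro x hx0 hx1 R hR
    have hxR : 0 < x * R := mul_pos hx0 hR.1
    have hxRd : x * R ≤ dCurve Γ t :=
      le_trans (mul_le_of_le_one_left hR.1.le hx1) hR.2
    have h := hratio_lb (x * R) R hxR hxRd hR.1 hR.2
    rw [Real.log_mul (ne_of_gt hx0) (ne_of_gt hR.1)] at h
    have heq : δ * (Real.log x + Real.log R - Real.log R) - 2 * K₀
        = δ * Real.log x - 2 * K₀ := by ring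
    rwa [heq] at h
  have hub_high : ∀ x : ℝ, 1 < x → ∀ R ∈ Ioc (0:ℝ) (dCurve Γ t),
      circSup Γ t (etaW a) R / circInf Γ t (etaW a) (x⁻¹ * R) ≤
        Real.exp (δ * Real.log x + 2 * K₀) := by
    intro x hx R hR
    have hx0 : 0 < x := lt_trans one_pos hx
    have hiR : 0 < x⁻¹ * R := mul_pos (inv_pos.mpr hx0) hR.1
    have hiRd : x⁻¹ * R ≤ dCurve Γ t :=
      le_trans (mul_le_of_le_one_left hR.1.le (inv_le_one_of_one_le₀ hx.le)) hR.2
    have h := hratio_ub R (x⁻¹ * R) hR.1 hR.2 hiR hiRd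
    rw [Real.log_mul (inv_ne_zero (ne_of_gt hx0)) (ne_of_gt hR.1), Real.log_inv] at h
    have heq : δ * (Real.log R - (-Real.log x + Real.log R)) + 2 * K₀
        = δ * Real.log x + 2 * K₀ := by ring
    rwa [heq] at h
  have hlb_high : ∀ x : ℝ, 1 < x → ∀ R ∈ Ioc (0:ℝ) (dCurve Γ t),
      Real.exp (δ * Real.log x - 2 * K₀) ≤
        circSup Γ t (etaW a) R / circInf Γ t (etaW a) (x⁻¹ * R) := by
    intro x hx R hR
    have hx0 : 0 < x := lt_trans one_pos hx
    have hiR : 0 < x⁻¹ * R := mul_pos (inv_pos.mpr hx0) hR.1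
    have hiRd : x⁻¹ * R ≤ dCurve Γ t :=
      le_trans (mul_le_of_le_one_left hR.1.le (inv_le_one_of_one_le₀ hx.le)) hR.2
    have h := hratio_lb R (x⁻¹ * R) hR.1 hR.2 hiR hiRd
    rw [Real.log_mul (inv_ne_zero (ne_of_gt hx0)) (ne_of_gt hR.1), Real.log_inv] at h
    have heq : δ * (Real.log R - (-Real.log x + Real.log R)) - 2 * K₀
        = δ * Real.log x - 2 * K₀ := by ring
    rwa [heq] at h
  -- equations for Wt
  have hWlow_eq : ∀ x : ℝ, x ≤ 1 → Wt Γ t (etaW a) x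
      = sSup ((fun R => circSup Γ t (etaW a) (x * R) / circInf Γ t (etaW a) R) ''
          Ioc 0 (dCurve Γ t)) := by
    intro x hx
    unfold Wt
    rw [if_pos hx]
  have hWhigh_eq : ∀ x : ℝ, 1 < x → Wt Γ t (etaW a) x
      = sSup ((fun R => circSup Γ t (etaW a) R / circInf Γ t (etaW a) (x⁻¹ * R)) ''
          Ioc 0 (dCurve Γ t)) := by
    intro x hx
    unfold Wt
    rw [if_neg (not_le.mpr hx)]
  have hdIoc : dCurve Γ t ∈ Ioc (0:ℝ) (dCurve Γ t) := ⟨hdpos, le_refl _⟩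
  -- sandwich
  have hsand : ∀ x : ℝ, 0 < x →
      Real.exp (δ * Real.log x - 2 * K₀) ≤ Wt Γ t (etaW a) x ∧
        Wt Γ t (etaW a) x ≤ Real.exp (δ * Real.log x + 2 * K₀) := by
    intro x hx0
    by_cases hx1 : x ≤ 1
    · rw [hWlow_eq x hx1]
      constructor
      · exact le_trans (hlb_low x hx0 hx1 _ hdIoc)
          (le_csSup ⟨_, by rintro _ ⟨R, hR, rfl⟩; exact hub_low x hx0 hx1 R hR⟩
            ⟨_, hdIoc, rfl⟩)
      · exact csSup_le ⟨_, ⟨_, hdIoc, rfl⟩⟩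
          (by rintro _ ⟨R, hR, rfl⟩; exact hub_low x hx0 hx1 R hR)
    · push_neg at hx1
      rw [hWhigh_eq x hx1]
      constructor
      · exact le_trans (hlb_high x hx1 _ hdIoc)
          (le_csSup ⟨_, by rintro _ ⟨R, hR, rfl⟩; exact hub_high x hx1 R hR⟩
            ⟨_, hdIoc, rfl⟩)
      · exact csSup_le ⟨_, ⟨_, hdIoc, rfl⟩⟩
          (by rintro _ ⟨R, hR, rfl⟩; exact hub_high x hx1 R hR)
  have hWpos : ∀ x : ℝ, 0 < x → 0 < Wt Γ t (etaW a) x :=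
    fun x hx => lt_of_lt_of_le (Real.exp_pos _) (hsand x hx).1
  refine ⟨2 * K₀, by linarith, hsand, ?_, ?_⟩
  -- submultiplicativity on (0,1]
  · intro x y hx0 hx1 hy0 hy1
    have hxy0 : 0 < x * y := mul_pos hx0 hy0
    have hxy1 : x * y ≤ 1 := mul_le_one₀ hx1 hy0.le hy1
    rw [hWlow_eq (x * y) hxy1]
    refine csSup_le ⟨_, ⟨_, hdIoc, rfl⟩⟩ ?_
    rintro _ ⟨R, hR, rfl⟩
    have hyR : y * R ∈ Ioc (0:ℝ) (dCurve Γ t) :=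
      ⟨mul_pos hy0 hR.1, le_trans (mul_le_of_le_one_left hR.1.le hy1) hR.2⟩
    have hciyR : 0 < circInf Γ t (etaW a) (y * R) := hci_pos _ hyR.1 hyR.2
    have h1 : circSup Γ t (etaW a) (x * (y * R)) / circInf Γ t (etaW a) (y * R) ≤
        Wt Γ t (etaW a) x := by
      rw [hWlow_eq x hx1]
      exact le_csSup ⟨_, by rintro _ ⟨S, hS, rfl⟩; exact hub_low x hx0 hx1 S hS⟩
        ⟨_, hyR, rfl⟩
    have h2 : circSup Γ t (etaW a) (y * R) / circInf Γ t (etaW a) R ≤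
        Wt Γ t (etaW a) y := by
      rw [hWlow_eq y hy1]
      exact le_csSup ⟨_, by rintro _ ⟨S, hS, rfl⟩; exact hub_low y hy0 hy1 S hS⟩
        ⟨_, hR, rfl⟩
    have h1' : circSup Γ t (etaW a) (x * (y * R)) ≤
        Wt Γ t (etaW a) x * circInf Γ t (etaW a) (y * R) := (div_le_iff₀ hciyR).mp h1
    have h3 : circSup Γ t (etaW a) (x * (y * R)) ≤
        Wt Γ t (etaW a) x * circSup Γ t (etaW a) (y * R) :=
      le_trans h1' (mul_le_mul_of_nonneg_left (hcic _ hyR.1 hyR.2) (hWpos x hx0).le)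
    have hciR : 0 < circInf Γ t (etaW a) R := hci_pos _ hR.1 hR.2
    calc circSup Γ t (etaW a) (x * y * R) / circInf Γ t (etaW a) R
        = circSup Γ t (etaW a) (x * (y * R)) / circInf Γ t (etaW a) R := by
          rw [mul_assoc]
      _ ≤ (Wt Γ t (etaW a) x * circSup Γ t (etaW a) (y * R)) / circInf Γ t (etaW a) R :=
          (div_le_div_iff_of_pos_right hciR).mpr h3
      _ = Wt Γ t (etaW a) x * (circSup Γ t (etaW a) (y * R) / circInf Γ t (etaW a) R) := by
          ring
      _ ≤ Wt Γ t (etaW a) x * Wt Γ t (etaW a) y :=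
          mul_le_mul_of_nonneg_left h2 (hWpos x hx0).le
  -- submultiplicativity on (1,∞)
  · intro x y hx hy
    have hx0 : 0 < x := lt_trans one_pos hx
    have hy0 : 0 < y := lt_trans one_pos hy
    have hxy : 1 < x * y := one_lt_mul hx.le hy
    rw [hWhigh_eq (x * y) hxy]
    refine csSup_le ⟨_, ⟨_, hdIoc, rfl⟩⟩ ?_
    rintro _ ⟨R, hR, rfl⟩
    have hR' : x⁻¹ * R ∈ Ioc (0:ℝ) (dCurve Γ t) :=
      ⟨mul_pos (inv_pos.mpr hx0) hR.1,
        le_trans (mul_le_of_le_one_left hR.1.le (inv_le_one_of_one_le₀ hx.le)) hR.2⟩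
    have hyR' : y⁻¹ * (x⁻¹ * R) ∈ Ioc (0:ℝ) (dCurve Γ t) :=
      ⟨mul_pos (inv_pos.mpr hy0) hR'.1,
        le_trans (mul_le_of_le_one_left hR'.1.le (inv_le_one_of_one_le₀ hy.le)) hR'.2⟩
    have hkey : (x * y)⁻¹ * R = y⁻¹ * (x⁻¹ * R) := by
      rw [mul_inv]
      ring
    have hciR' : 0 < circInf Γ t (etaW a) (x⁻¹ * R) := hci_pos _ hR'.1 hR'.2
    have hcsR' : 0 < circSup Γ t (etaW a) (x⁻¹ * R) := hcs_pos _ hR'.1 hR'.2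
    have hciyR' : 0 < circInf Γ t (etaW a) (y⁻¹ * (x⁻¹ * R)) := hci_pos _ hyR'.1 hyR'.2
    have h1 : circSup Γ t (etaW a) R / circInf Γ t (etaW a) (x⁻¹ * R) ≤
        Wt Γ t (etaW a) x := by
      rw [hWhigh_eq x hx]
      exact le_csSup ⟨_, by rintro _ ⟨S, hS, rfl⟩; exact hub_high x hx S hS⟩
        ⟨_, hR, rfl⟩
    have h2 : circSup Γ t (etaW a) (x⁻¹ * R) / circInf Γ t (etaW a) (y⁻¹ * (x⁻¹ * R)) ≤
        Wt Γ t (etaW a) y := by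
      rw [hWhigh_eq y hy]
      exact le_csSup ⟨_, by rintro _ ⟨S, hS, rfl⟩; exact hub_high y hy S hS⟩
        ⟨_, hR', rfl⟩
    have hsplit : circSup Γ t (etaW a) R / circInf Γ t (etaW a) (y⁻¹ * (x⁻¹ * R))
        = (circSup Γ t (etaW a) R / circInf Γ t (etaW a) (x⁻¹ * R)) *
          (circInf Γ t (etaW a) (x⁻¹ * R) / circInf Γ t (etaW a) (y⁻¹ * (x⁻¹ * R))) := by
      rw [eq_comm, div_mul_div_comm,
        mul_comm (circSup Γ t (etaW a) R) (circInf Γ t (etaW a) (x⁻¹ * R)),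
        mul_div_mul_left _ _ (ne_of_gt hciR')]
    have hmid : circInf Γ t (etaW a) (x⁻¹ * R) / circInf Γ t (etaW a) (y⁻¹ * (x⁻¹ * R)) ≤
        circSup Γ t (etaW a) (x⁻¹ * R) / circInf Γ t (etaW a) (y⁻¹ * (x⁻¹ * R)) := by
      gcongr
      exact hcic _ hR'.1 hR'.2
    calc circSup Γ t (etaW a) R / circInf Γ t (etaW a) ((x * y)⁻¹ * R)
        = (circSup Γ t (etaW a) R / circInf Γ t (etaW a) (x⁻¹ * R)) *
          (circInf Γ t (etaW a) (x⁻¹ * R) / circInf Γ t (etaW a) (y⁻¹ * (x⁻¹ * R))) := by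
          rw [hkey, hsplit]
      _ ≤ Wt Γ t (etaW a) x *
          (circSup Γ t (etaW a) (x⁻¹ * R) / circInf Γ t (etaW a) (y⁻¹ * (x⁻¹ * R))) := by
          apply mul_le_mul h1 hmid (div_nonneg hciR'.le hciyR'.le) (hWpos x hx0).le
      _ ≤ Wt Γ t (etaW a) x * Wt Γ t (etaW a) y :=
          mul_le_mul_of_nonneg_left h2 (hWpos x hx0).le

end SpiralityAux

/-- If `Γ` is a Carleson curve and `arg(τ−t) = −δ log|τ−t| + O(1)` as `τ → t`,
then the spirality indices satisfy `δ_t⁻ = δ_t⁺ = δ`. -/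
theorem spirality_of_logarithmic_whirl (Γ : Set ℂ) (hΓ : IsCarleson Γ)
    (t : ℂ) (ht : t ∈ Γ) (a : ℂ → ℝ) (ha : IsArgBranch Γ t a) (δ : ℝ)
    (hO : ∃ C : ℝ, ∃ ε₀ > (0:ℝ), ∀ τ ∈ Γ \ {t}, ‖τ - t‖ < ε₀ →
      |a τ + δ * Real.log (‖τ - t‖)| ≤ C) :
    spirMinus Γ t a = δ ∧ spirPlus Γ t a = δ := by
  obtain ⟨K, hK0, hsand, hsubL, hsubH⟩ := SpiralityAux.W_bounds hΓ ht ha hO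
  set ρ : ℝ → ℝ := Wt Γ t (etaW a) with hρ
  have hρpos : ∀ x : ℝ, 0 < x → 0 < ρ x :=
    fun x hx => lt_of_lt_of_le (Real.exp_pos _) (hsand x hx).1
  have hpowL : ∀ x : ℝ, 0 < x → x < 1 → ∀ n : ℕ, 1 ≤ n → ρ (x ^ n) ≤ (ρ x) ^ n := by
    intro x hx0 hx1 n hn
    induction n, hn using Nat.le_induction with
    | base => simp [pow_one]
    | succ n hn ih =>
      have hxn0 : 0 < x ^ n := pow_pos hx0 n
      have hxn1 : x ^ n ≤ 1 := pow_le_one₀ hx0.le hx1.le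
      calc ρ (x ^ (n + 1)) = ρ (x * x ^ n) := by rw [pow_succ, mul_comm]
        _ ≤ ρ x * ρ (x ^ n) := hsubL x (x ^ n) hx0 hx1.le hxn0 hxn1
        _ ≤ ρ x * (ρ x) ^ n := mul_le_mul_of_nonneg_left ih (hρpos x hx0).le
        _ = (ρ x) ^ (n + 1) := by rw [pow_succ, mul_comm]
  have hpowH : ∀ x : ℝ, 1 < x → ∀ n : ℕ, 1 ≤ n → ρ (x ^ n) ≤ (ρ x) ^ n := by
    intro x hx n hn
    have hx0 : 0 < x := lt_trans one_pos hx
    induction n, hn using Nat.le_induction with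
    | base => simp [pow_one]
    | succ n hn ih =>
      have hxn1 : 1 < x ^ n := one_lt_pow₀ hx (by omega)
      calc ρ (x ^ (n + 1)) = ρ (x * x ^ n) := by rw [pow_succ, mul_comm]
        _ ≤ ρ x * ρ (x ^ n) := hsubH x (x ^ n) hx hxn1
        _ ≤ ρ x * (ρ x) ^ n := mul_le_mul_of_nonneg_left ih (hρpos x hx0).le
        _ = (ρ x) ^ (n + 1) := by rw [pow_succ, mul_comm]
  constructor
  · show alphaIdx ρ = δ
    exact SpiralityAux.alpha_eq_of ρ δ K hK0 (fun x hx => (hsand x hx).1)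
      (fun x hx => (hsand x hx).2) hpowL
  · show betaIdx ρ = δ
    exact SpiralityAux.beta_eq_of ρ δ K hK0 (fun x hx => (hsand x hx).1)
      (fun x hx => (hsand x hx).2) hpowH
end
end
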